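/- Let L be the Laplacian of a strongly connected weighted digraph and R = diag(r) with rL = 0, r > 0, r·1_N = N. Then zero is a simple eigenvalue of L̂ = RL + LᵀR, and all other eigenvalues of L̂ are strictly positive; moreover there exists an orthogonal matrix U whose first column is (1/√N)·1_N such that Uᵀ L̂ U = diag(0, λ_2, ..., λ_N) with 0 < λ_2 ≤ ... ≤ λ_N. -/

import Mathlib

open Matrix BigOperators

/-- Zero is a simple eigenvalue of `L̂ = R L + Lᵀ R`, all other eigenvalues are
positive, and `L̂` is orthogonally diagonalized by a matrix `U` whose first column
is `(1/√N) 1`. -/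
theorem stmt_2 (N : ℕ) (hN : 0 < N) (a : Fin N → Fin N → ℝ)
    (hnn : ∀ i j, 0 ≤ a i j) (hdiag : ∀ i, a i i = 0)
    (hconn : ∀ i j : Fin N, i ≠ j →
      Relation.TransGen (fun u v : Fin N => a v u ≠ 0) i j)
    (L : Matrix (Fin N) (Fin N) ℝ)
    (hL : L = Matrix.of fun i j => (if i = j then ∑ k, a i k else 0) - a i j)
    (r : Fin N → ℝ) (hrpos : ∀ i, 0 < r i)
    (hrL : Matrix.vecMul r L = 0) (hrsum : ∑ i, r i = N)
    (R : Matrix (Fin N) (Fin N) ℝ) (hR : R = Matrix.diagonal r) :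
    ∃ (U : Matrix (Fin N) (Fin N) ℝ) (d : Fin N → ℝ),
      Uᵀ * U = 1 ∧ U * Uᵀ = 1 ∧
      (∀ i, U i ⟨0, hN⟩ = 1 / Real.sqrt N) ∧
      Uᵀ * (R * L + Lᵀ * R) * U = Matrix.diagonal d ∧
      d ⟨0, hN⟩ = 0 ∧ Monotone d ∧
      (∀ i : Fin N, i ≠ ⟨0, hN⟩ → 0 < d i) := by
  set A := R * L + Lᵀ * R with hAdef
  set S : Fin N → ℝ := fun i => ∑ k, a i k with hS
  have hLent : ∀ i j, L i j = (if i = j then S i else 0) - a i j := by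
    intro i j; rw [hL]; rfl
  have hAent : ∀ i j, A i j = r i * L i j + L j i * r j := by
    intro i j
    simp [hAdef, hR, Matrix.add_apply, Matrix.diagonal_mul, Matrix.mul_diagonal,
      Matrix.transpose_apply]
  -- key balance equation from rL = 0
  have key : ∀ j, (∑ i, r i * a i j) = r j * S j := by
    intro j
    have h0 : ∑ i, r i * L i j = 0 := congrFun hrL j
    have h1 : ∑ i, (r i * (if i = j then S i else 0) - r i * a i j) = 0 := by
      rw [show (∑ i, (r i * (if i = j then S i else 0) - r i * a i j))
          = ∑ i, r i * L i j from
        Finset.sum_congr rfl fun i _ => by rw [hLent i j]; ring, h0]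
    rw [Finset.sum_sub_distrib] at h1
    have h2 : ∑ i, r i * (if i = j then S i else 0) = r j * S j := by
      rw [Finset.sum_eq_single j]
      · simp
      · intro b _ hb; simp [hb]
      · simp
    rw [h2] at h1
    linarith
  -- quadratic form identity
  have quad : ∀ x : Fin N → ℝ,
      x ⬝ᵥ A *ᵥ x = ∑ i, ∑ j, r i * a i j * (x i - x j) ^ 2 := by
    intro x
    have hT4 : ∑ i, ∑ j, r i * (if i = j then S i else 0) * (x i * x j)
        = ∑ i, r i * S i * x i ^ 2 := by
      refine Finset.sum_congr rfl fun i _ => ?_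
      rw [Finset.sum_eq_single i]
      · rw [if_pos rfl]; ring
      · intro b _ hb; simp [Ne.symm hb]
      · simp
    have hT4' : ∑ i, ∑ j, r j * (if j = i then S j else 0) * (x i * x j)
        = ∑ i, r i * S i * x i ^ 2 := by
      rw [Finset.sum_comm]
      refine Finset.sum_congr rfl fun j _ => ?_
      rw [Finset.sum_eq_single j]
      · rw [if_pos rfl]; ring
      · intro b _ hb; simp [Ne.symm hb]
      · simp
    have hT3' : ∑ i, ∑ j, r j * a j i * (x i * x j)
        = ∑ i, ∑ j, r i * a i j * (x i * x j) := by
      rw [Finset.sum_comm]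
      exact Finset.sum_congr rfl fun i _ => Finset.sum_congr rfl fun j _ => by ring
    have hT1 : ∑ i, ∑ j, r i * a i j * x i ^ 2 = ∑ i, r i * S i * x i ^ 2 := by
      refine Finset.sum_congr rfl fun i _ => ?_
      rw [show r i * S i * x i ^ 2 = ∑ k, a i k * (r i * x i ^ 2) by
        rw [← Finset.sum_mul, hS]; ring]
      exact Finset.sum_congr rfl fun j _ => by ring
    have hT2 : ∑ i, ∑ j, r i * a i j * x j ^ 2 = ∑ i, r i * S i * x i ^ 2 := by
      rw [Finset.sum_comm]
      refine Finset.sum_congr rfl fun j _ => ?_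
      rw [show ∑ i, r i * a i j * x j ^ 2 = (∑ i, r i * a i j) * x j ^ 2 by
        rw [Finset.sum_mul]]
      rw [key]
    have lhs1 : x ⬝ᵥ A *ᵥ x
        = ∑ i, ∑ j, ((r i * (if i = j then S i else 0) * (x i * x j)
            + r j * (if j = i then S j else 0) * (x i * x j))
          - (r i * a i j * (x i * x j) + r j * a j i * (x i * x j))) := by
      simp only [dotProduct, mulVec, Finset.mul_sum]
      refine Finset.sum_congr rfl fun i _ => Finset.sum_congr rfl fun j _ => ?_
      rw [hAent, hLent i j, hLent j i]; ring
    have rhs1 : ∑ i, ∑ j, r i * a i j * (x i - x j) ^ 2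
        = ∑ i, ∑ j, ((r i * a i j * x i ^ 2 + r i * a i j * x j ^ 2)
            - (2 * (r i * a i j * (x i * x j)))) := by
      exact Finset.sum_congr rfl fun i _ => Finset.sum_congr rfl fun j _ => by ring
    simp only [Finset.sum_sub_distrib, Finset.sum_add_distrib] at lhs1 rhs1
    rw [lhs1, rhs1, hT4, hT4', hT3', hT1, hT2]
    have h2T3 : ∑ i, ∑ j, 2 * (r i * a i j * (x i * x j))
        = 2 * ∑ i, ∑ j, r i * a i j * (x i * x j) := by
      rw [Finset.mul_sum]
      exact Finset.sum_congr rfl fun i _ => by rw [Finset.mul_sum]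
    rw [h2T3]; ring
  -- kernel characterization
  have hker : ∀ x : Fin N → ℝ, A *ᵥ x = 0 → ∀ i j, x i = x j := by
    intro x hx i j
    have hq : ∑ p, ∑ q, r p * a p q * (x p - x q) ^ 2 = 0 := by
      rw [← quad, hx]; simp
    have hterm : ∀ p q, r p * a p q * (x p - x q) ^ 2 = 0 := by
      have hnn2 : ∀ p q, 0 ≤ r p * a p q * (x p - x q) ^ 2 := fun p q =>
        mul_nonneg (mul_nonneg (hrpos p).le (hnn p q)) (sq_nonneg _)
      intro p q
      have h1 := (Finset.sum_eq_zero_iff_of_nonneg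
        (fun p _ => Finset.sum_nonneg fun q _ => hnn2 p q)).mp hq p (Finset.mem_univ p)
      exact (Finset.sum_eq_zero_iff_of_nonneg
        (fun q _ => hnn2 p q)).mp h1 q (Finset.mem_univ q)
    have hedge : ∀ p q, a p q ≠ 0 → x p = x q := by
      intro p q hpq
      have h3 : (x p - x q) ^ 2 = 0 := by
        rcases mul_eq_zero.mp (hterm p q) with h | h
        · rcases mul_eq_zero.mp h with h' | h'
          · exact absurd h' (hrpos p).ne'
          · exact absurd h' hpq
        · exact h
      have h4 := sq_eq_zero_iff.mp h3
      linarith [sub_eq_zero.mp h4]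
    by_cases hij : i = j
    · rw [hij]
    · have hpath : ∀ u v : Fin N,
          Relation.TransGen (fun u v : Fin N => a v u ≠ 0) u v → x u = x v := by
        intro u v h
        induction h with
        | single h' => exact (hedge _ _ h').symm
        | tail _ h' ih => exact ih.trans (hedge _ _ h').symm
      exact hpath i j (hconn i j hij)
  -- A annihilates the all-ones vector
  have hones : A *ᵥ (fun _ => (1 : ℝ)) = 0 := by
    funext i
    have hrowL : ∑ j, L i j = 0 := by
      rw [Finset.sum_congr rfl fun j _ => hLent i j, Finset.sum_sub_distrib]
      simp [hS]
    have hcolrL : ∑ j, r j * L j i = 0 := congrFun hrL i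
    have : ∑ j, A i j = 0 := by
      rw [Finset.sum_congr rfl fun j _ => hAent i j, Finset.sum_add_distrib]
      rw [show ∑ j, r i * L i j = r i * ∑ j, L i j by rw [Finset.mul_sum]]
      rw [show ∑ j, L j i * r j = ∑ j, r j * L j i from
        Finset.sum_congr rfl fun j _ => by ring]
      rw [hrowL, hcolrL]; ring
    simpa [mulVec, dotProduct] using this
  -- Hermitian
  have hherm : A.IsHermitian := by
    show Aᴴ = A
    ext i j
    simp only [Matrix.conjTranspose_apply, star_trivial]
    rw [hAent, hAent]; ring
  set V : Matrix (Fin N) (Fin N) ℝ := (hherm.eigenvectorUnitary : Matrix (Fin N) (Fin N) ℝ) with hV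
  set μ : Fin N → ℝ := hherm.eigenvalues with hμ
  have hVsV : star V * V = 1 := Matrix.mem_unitaryGroup_iff'.mp hherm.eigenvectorUnitary.2
  have hVVs : V * star V = 1 := Matrix.mem_unitaryGroup_iff.mp hherm.eigenvectorUnitary.2
  have hspec' : A = V * Matrix.diagonal μ * star V := by
    have h := hherm.spectral_theorem
    simpa using h
  have hVortho : ∀ p q, ∑ i, V i p * V i q = (if p = q then (1:ℝ) else 0) := by
    intro p q
    have h := congrFun (congrFun hVsV p) q
    simpa [Matrix.mul_apply, Matrix.star_apply, Matrix.one_apply] using h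
  have hdiagspec : star V * A * V = Matrix.diagonal μ := by
    rw [hspec']
    simp only [Matrix.mul_assoc]
    rw [hVsV]
    rw [Matrix.mul_one, ← Matrix.mul_assoc, hVsV, Matrix.one_mul]
  have hAV : ∀ p q, ∑ l, ∑ i, V i p * A i l * V l q = (if p = q then μ p else 0) := by
    intro p q
    have h := congrFun (congrFun hdiagspec p) q
    simp only [Matrix.mul_apply, Matrix.star_apply, star_trivial,
      Matrix.diagonal_apply, Finset.sum_mul] at h
    rw [← h]
  have hAVmat : A * V = V * Matrix.diagonal μ := by
    rw [hspec']
    simp only [Matrix.mul_assoc]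
    rw [hVsV, Matrix.mul_one]
  have hcol : ∀ i k, ∑ l, A i l * V l k = V i k * μ k := by
    intro i k
    have h := congrFun (congrFun hAVmat i) k
    simp only [Matrix.mul_apply, Matrix.diagonal_apply, mul_ite, mul_zero,
      Finset.sum_ite_eq, Finset.sum_ite_eq', Finset.mem_univ, if_true] at h
    exact h
  -- eigenvalues nonneg
  have hmu0 : ∀ k, 0 ≤ μ k := by
    intro k
    have hq : (fun i => V i k) ⬝ᵥ A *ᵥ (fun i => V i k) = μ k := by
      simp only [dotProduct, mulVec]
      calc ∑ i, V i k * ∑ l, A i l * V l k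
          = ∑ i, μ k * (V i k * V i k) := by
            refine Finset.sum_congr rfl fun i _ => ?_
            rw [hcol]; ring
        _ = μ k * ∑ i, V i k * V i k := by rw [Finset.mul_sum]
        _ = μ k := by rw [hVortho k k]; simp
    rw [quad] at hq
    rw [← hq]
    exact Finset.sum_nonneg fun p _ => Finset.sum_nonneg fun q _ =>
      mul_nonneg (mul_nonneg (hrpos p).le (hnn p q)) (sq_nonneg _)
  -- zero eigenvalue columns are constant
  have hconst : ∀ k, μ k = 0 → ∀ i j, V i k = V j k := by
    intro k hk
    apply hker (fun i => V i k)
    funext i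
    simp only [mulVec, dotProduct, Pi.zero_apply]
    rw [hcol, hk, mul_zero]
  have hnormk : ∀ k, ∑ i, V i k * V i k = 1 := by
    intro k; rw [hVortho k k]; simp
  have hconstval : ∀ k, μ k = 0 → ∀ i, V i k = V ⟨0, hN⟩ k := fun k hk i =>
    hconst k hk i ⟨0, hN⟩
  have huniq : ∀ k l, μ k = 0 → μ l = 0 → k = l := by
    intro k l hk hl
    by_contra hkl
    have h1 : ∑ i, V i k * V i l = 0 := by rw [hVortho]; simp [hkl]
    have h2 : ∑ i, V i k * V i l = N * (V ⟨0, hN⟩ k * V ⟨0, hN⟩ l) := by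
      rw [Finset.sum_congr rfl fun i _ => by
        rw [hconstval k hk i, hconstval l hl i]]
      simp [Finset.card_univ, mul_comm]
    have hNne : (N : ℝ) ≠ 0 := Nat.cast_ne_zero.mpr hN.ne'
    have h3 : V ⟨0, hN⟩ k * V ⟨0, hN⟩ l = 0 := by
      rw [h2] at h1
      exact (mul_eq_zero.mp h1).resolve_left hNne
    have hcontr : ∀ m, μ m = 0 → V ⟨0, hN⟩ m = 0 → False := by
      intro m hm hme
      have := hnormk m
      rw [Finset.sum_congr rfl fun i _ => by rw [hconstval m hm i, hme]] at this
      simp at this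
    rcases mul_eq_zero.mp h3 with h | h
    · exact hcontr k hk h
    · exact hcontr l hl h
  -- existence of a zero eigenvalue
  have hz : ∃ k, μ k = 0 := by
    have hdet : A.det = 0 := by
      apply Matrix.exists_mulVec_eq_zero_iff.mp
      refine ⟨(fun _ => (1:ℝ)), ?_, hones⟩
      intro h
      have := congrFun h ⟨0, hN⟩
      simp at this
    have hprod := hherm.det_eq_prod_eigenvalues
    rw [hdet] at hprod
    have : ∏ i, μ i = 0 := by exact_mod_cast hprod.symm
    obtain ⟨k, _, hk⟩ := Finset.prod_eq_zero_iff.mp this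
    exact ⟨k, hk⟩
  -- sorting
  set σ : Equiv.Perm (Fin N) := Tuple.sort μ with hσ
  set d : Fin N → ℝ := μ ∘ σ with hd
  have hmono : Monotone d := Tuple.monotone_sort μ
  obtain ⟨k0, hk0⟩ := hz
  have hd0 : d ⟨0, hN⟩ = 0 := by
    have h1 : 0 ≤ d ⟨0, hN⟩ := hmu0 _
    have h2 : d ⟨0, hN⟩ ≤ d (σ⁻¹ k0) := hmono (Fin.mk_le_of_le_val (Nat.zero_le _))
    have h3 : d (σ⁻¹ k0) = 0 := by
      show μ (σ (σ⁻¹ k0)) = 0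
      rw [Equiv.Perm.inv_def, Equiv.apply_symm_apply]; exact hk0
    linarith
  have hμσ0 : μ (σ ⟨0, hN⟩) = 0 := hd0
  have hdpos : ∀ i : Fin N, i ≠ ⟨0, hN⟩ → 0 < d i := by
    intro i hi
    rcases (hmu0 (σ i)).lt_or_eq with h | h
    · exact h
    · exfalso
      exact hi (σ.injective (huniq (σ i) (σ ⟨0, hN⟩) h.symm hμσ0))
  -- sign
  set c : ℝ := V ⟨0, hN⟩ (σ ⟨0, hN⟩) with hc
  have hcval : ∀ i, V i (σ ⟨0, hN⟩) = c := fun i => hconstval _ hμσ0 i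
  have hNpos : (0:ℝ) < N := by exact_mod_cast hN
  have hc2 : (N : ℝ) * (c * c) = 1 := by
    have := hnormk (σ ⟨0, hN⟩)
    rw [Finset.sum_congr rfl fun i _ => by rw [hcval i]] at this
    simpa [Finset.card_univ, mul_comm] using this
  have habs : |c| = 1 / Real.sqrt N := by
    have hcsq : c ^ 2 = 1 / N := by
      field_simp at hc2 ⊢
      nlinarith [hc2]
    rw [← Real.sqrt_sq_eq_abs, hcsq]
    rw [one_div, one_div, Real.sqrt_inv]
  set w : Fin N → ℝ := fun j => if j = ⟨0, hN⟩ ∧ c < 0 then -1 else 1 with hwdef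
  have hw2 : ∀ j, w j * w j = 1 := by
    intro j
    simp only [hwdef]
    split <;> norm_num
  have hwc : w ⟨0, hN⟩ * c = 1 / Real.sqrt N := by
    rw [← habs]
    simp only [hwdef]
    rcases lt_or_ge c 0 with h | h
    · simp [h, abs_of_neg h]
    · simp [not_lt.mpr h, abs_of_nonneg h]
  -- the orthogonal matrix
  set U : Matrix (Fin N) (Fin N) ℝ := Matrix.of (fun i j => w j * V i (σ j)) with hU
  have key2 : ∀ j k, ∑ i, U i j * U i k = if j = k then (1:ℝ) else 0 := by
    intro j k
    have h1 : ∑ i, U i j * U i k = w j * w k * ∑ i, V i (σ j) * V i (σ k) := by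
      rw [Finset.mul_sum]
      exact Finset.sum_congr rfl fun i _ => by simp only [hU, Matrix.of_apply]; ring
    rw [h1, hVortho]
    by_cases hjk : j = k
    · subst hjk; simp [hw2]
    · have hne : σ j ≠ σ k := fun h => hjk (σ.injective h)
      simp [hjk, hne]
  have hUtU : Uᵀ * U = 1 := by
    ext j k
    rw [Matrix.mul_apply]
    simp only [Matrix.transpose_apply]
    rw [key2, Matrix.one_apply]
  have hUUt : U * Uᵀ = 1 := mul_eq_one_comm.mp hUtU
  have hcol0 : ∀ i, U i ⟨0, hN⟩ = 1 / Real.sqrt N := by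
    intro i
    simp only [hU, Matrix.of_apply]
    rw [hcval i, hwc]
  have hdiagU : Uᵀ * A * U = Matrix.diagonal d := by
    ext j k
    have h1 : (Uᵀ * A * U) j k = ∑ l, (∑ i, U i j * A i l) * U l k := by
      simp only [Matrix.mul_apply, Matrix.transpose_apply]
    have h2 : (Uᵀ * A * U) j k
        = w j * w k * ∑ l, ∑ i, V i (σ j) * A i l * V l (σ k) := by
      rw [h1, Finset.mul_sum]
      refine Finset.sum_congr rfl fun l _ => ?_
      rw [Finset.sum_mul, Finset.mul_sum]
      refine Finset.sum_congr rfl fun i _ => ?_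
      simp only [hU, Matrix.of_apply]; ring
    rw [h2, hAV, Matrix.diagonal_apply]
    by_cases hjk : j = k
    · subst hjk; simp [hw2, hd]
    · have hne : σ j ≠ σ k := fun h => hjk (σ.injective h)
      simp [hjk, hne]
  exact ⟨U, d, hUtU, hUUt, hcol0, hdiagU, hd0, hmono, hdpos⟩
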